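/- Let A be an ω-homogeneous structure in a countable signature whose finitely generated substructures are finite, and let ≺ be a linear ordering on A such that (A,≺) is also ω-homogeneous. Set H = Aut(A). If Age(A,≺) satisfies both the Ramsey property and the ordering property, then the orbit closure cl(H·≺) ⊆ LO(A) is the universal minimal flow of H: it is a minimal H-flow, and every minimal H-flow is a continuous H-equivariant image of it. -/

import Mathlib

open FirstOrder FirstOrder.Language Topology

universe u v w x

/-- The compact space of all (strict) linear orderings on `α`, viewed as a subspace of the
product space `Bool ^ (α × α)` (with `Bool` discrete). -/
abbrev LO (α : Type w) : Type w :=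
  {r : α → α → Bool // IsStrictTotalOrder α (fun a b => r a b = true)}

/-- The natural action of a bijection on the space of linear orderings:
`a (g • r) b ↔ g⁻¹ a <_r g⁻¹ b`. -/
def permLO {α : Type w} (g : Equiv.Perm α) (r : LO α) : LO α :=
  ⟨fun a b => r.1 (g.symm a) (g.symm b), by
    haveI := r.2
    exact
      { trichotomous := fun a b h1 h2 => by
          rcases trichotomous_of (fun x y => r.1 x y = true) (g.symm a) (g.symm b) with h | h | h
          · exact (h1 h).elim
          · exact g.symm.injective h
          · exact (h2 h).elim
        irrefl := fun a => irrefl_of (fun x y => r.1 x y = true) (g.symm a)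
        trans := fun a b c hab hbc => trans_of (fun x y => r.1 x y = true) hab hbc }⟩

variable {L : FirstOrder.Language.{u, v}} {M : Type w} [L.Structure M]

/-- The automorphism group of a first-order structure. -/
instance autGroup : Group (M ≃[L] M) where
  mul f g := f.comp g
  one := Language.Equiv.refl L M
  inv f := f.symm
  mul_assoc _ _ _ := rfl
  one_mul := Language.Equiv.refl_comp
  mul_one := Language.Equiv.comp_refl
  inv_mul_cancel := Language.Equiv.symm_comp_self

/-- The topology of pointwise convergence on the automorphism group of a structure. -/
instance autTopology : TopologicalSpace (M ≃[L] M) :=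
  letI : TopologicalSpace M := ⊥
  TopologicalSpace.induced
    (fun g : M ≃[L] M => ((g : M → M), (g.symm : M → M))) inferInstance

/-- The orbit of a linear ordering under the full automorphism group `H = Aut(M)`. -/
def fullOrbitLO (L : FirstOrder.Language.{u, v}) (M : Type w) [L.Structure M] (r : LO M) :
    Set (LO M) :=
  Set.range fun g : M ≃[L] M => permLO g.toEquiv r

/-- The linearly ordered structure `(M, ≺)` is `ω`-homogeneous. -/
def OrdUltrahomogeneous (L : FirstOrder.Language.{u, v}) (M : Type w) [L.Structure M]
    (prec : LO M) : Prop :=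
  ∀ (S : L.Substructure M), S.FG → ∀ e : S ↪[L] M,
    (∀ x y : S, prec.1 x y = true ↔ prec.1 (e x) (e y) = true) →
    ∃ g : M ≃[L] M, (∀ a b : M, prec.1 (g a) (g b) = prec.1 a b) ∧ ∀ x : S, g x = e x

/-- `S'` is a copy of `S` in `(M, ≺)`. -/
def OrdIsoCopy (L : FirstOrder.Language.{u, v}) (M : Type w) [L.Structure M] (prec : LO M)
    (S S' : L.Substructure M) : Prop :=
  ∃ φ : S ≃[L] S', ∀ x y : S, prec.1 x y = true ↔ prec.1 (φ x) (φ y) = true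

/-- The age of `(M, ≺)` satisfies the Ramsey property. -/
def OrderedAgeRamsey (L : FirstOrder.Language.{u, v}) (M : Type w) [L.Structure M]
    (prec : LO M) : Prop :=
  ∀ S T : L.Substructure M, S.FG → T.FG →
    (∃ e : S ↪[L] T, ∀ x y : S, prec.1 x y = true ↔ prec.1 (e x) (e y) = true) →
    ∀ k : ℕ, 2 ≤ k → ∃ C : L.Substructure M, C.FG ∧
      ∀ c : L.Substructure M → Fin k,
        ∃ T' : L.Substructure M, T' ≤ C ∧ OrdIsoCopy L M prec T T' ∧
          ∃ i : Fin k, ∀ S' : L.Substructure M, S' ≤ T' → OrdIsoCopy L M prec S S' → c S' = i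

/-- The ordered structure `(S, r)` belongs to the age of `(M, ≺)`. -/
def InOrderedAge (L : FirstOrder.Language.{u, v}) (M : Type w) [L.Structure M] (prec : LO M)
    (S : L.Substructure M) (r : S → S → Bool) : Prop :=
  ∃ e : S ↪[L] M, ∀ x y : S, (r x y = true ↔ prec.1 (e x) (e y) = true)

/-- The age of `(M, ≺)` satisfies the ordering property. -/
def OrderingProperty (L : FirstOrder.Language.{u, v}) (M : Type w) [L.Structure M]
    (prec : LO M) : Prop :=
  ∀ S : L.Substructure M, S.FG → ∃ T : L.Substructure M, T.FG ∧
    ∀ (r : S → S → Bool) (r' : T → T → Bool),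
      IsStrictTotalOrder S (fun x y => r x y = true) →
      IsStrictTotalOrder T (fun x y => r' x y = true) →
      InOrderedAge L M prec S r → InOrderedAge L M prec T r' →
      ∃ e : S ↪[L] T, ∀ x y : S, (r x y = true ↔ r' (e x) (e y) = true)


/-! ### Auxiliary development -/

section Aux

open Set Filter Uniformity

lemma LO.ext' {α : Type*} {r s : LO α} (h : ∀ a b, r.1 a b = s.1 a b) : r = s :=
  Subtype.ext (funext fun a => funext fun b => h a b)

lemma aut_mul_apply (g h : M ≃[L] M) (x : M) : (g * h) x = g (h x) := rfl

lemma aut_inv_apply (g : M ≃[L] M) (x : M) : g⁻¹ x = g.symm x := rfl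

lemma aut_one_apply (x : M) : (1 : M ≃[L] M) x = x := rfl

lemma permLO_apply {α : Type*} (g : Equiv.Perm α) (r : LO α) (a b : α) :
    (permLO g r).1 a b = r.1 (g.symm a) (g.symm b) := rfl

lemma permLO_one (r : LO M) : permLO (1 : M ≃[L] M).toEquiv r = r :=
  LO.ext' fun _ _ => rfl

lemma permLO_mul (g h : M ≃[L] M) (r : LO M) :
    permLO (g * h).toEquiv r = permLO g.toEquiv (permLO h.toEquiv r) :=
  LO.ext' fun _ _ => rfl

lemma continuous_evalLO (a b : M) : Continuous fun r : LO M => r.1 a b :=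
  (continuous_apply b).comp ((continuous_apply a).comp continuous_subtype_val)

lemma continuous_permLO (g : Equiv.Perm M) : Continuous fun r : LO M => permLO g r := by
  apply Continuous.subtype_mk
  exact continuous_pi fun a => continuous_pi fun b => continuous_evalLO _ _

lemma isClosed_setLO :
    IsClosed {r : M → M → Bool | IsStrictTotalOrder M (fun a b => r a b = true)} := by
  have heq : {r : M → M → Bool | IsStrictTotalOrder M (fun a b => r a b = true)} =
      (⋂ (a : M) (b : M), {r : M → M → Bool | r a b = true ∨ a = b ∨ r b a = true}) ∩
      ((⋂ a : M, {r : M → M → Bool | ¬ r a a = true}) ∩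
      (⋂ (a : M) (b : M) (c : M),
        {r : M → M → Bool | ¬ r a b = true ∨ ¬ r b c = true ∨ r a c = true})) := by
    ext r
    constructor
    · intro h
      refine ⟨?_, ?_, ?_⟩ <;> simp only [Set.mem_iInter, Set.mem_setOf_eq]
      · intro a b
        rcases Classical.em (r a b = true) with h1 | h1
        · exact Or.inl h1
        rcases Classical.em (r b a = true) with h2 | h2
        · exact Or.inr (Or.inr h2)
        exact Or.inr (Or.inl (h.trichotomous a b h1 h2))
      · exact fun a => h.irrefl a
      · intro a b c
        by_cases h1 : r a b = true
        · by_cases h2 : r b c = true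
          · exact Or.inr (Or.inr (h.trans a b c h1 h2))
          · exact Or.inr (Or.inl h2)
        · exact Or.inl h1
    · rintro ⟨h1, h2, h3⟩
      simp only [Set.mem_iInter, Set.mem_setOf_eq] at h1 h2 h3
      exact { trichotomous := fun a b hab hba => by
                rcases h1 a b with h | h | h
                · exact absurd h hab
                · exact h
                · exact absurd h hba
              irrefl := h2,
              trans := fun a b c hab hbc => by
                rcases h3 a b c with h | h | h
                · exact absurd hab h
                · exact absurd hbc h
                · exact h }
  rw [heq]
  have hev : ∀ a b : M, Continuous fun r : M → M → Bool => r a b := fun a b =>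
    (continuous_apply b).comp (continuous_apply a)
  have hcl : ∀ a b : M, IsClosed {r : M → M → Bool | r a b = true} := fun a b =>
    (isClosed_discrete {true}).preimage (hev a b)
  have hco : ∀ a b : M, IsClosed {r : M → M → Bool | ¬ r a b = true} := fun a b =>
    (isClosed_discrete {true}ᶜ).preimage (hev a b)
  refine IsClosed.inter ?_ (IsClosed.inter ?_ ?_)
  · refine isClosed_iInter fun a => isClosed_iInter fun b => ?_
    have : {r : M → M → Bool | r a b = true ∨ a = b ∨ r b a = true} =
        {r : M → M → Bool | r a b = true} ∪ ({r : M → M → Bool | a = b} ∪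
          {r : M → M → Bool | r b a = true}) := rfl
    rw [this]
    refine (hcl a b).union (IsClosed.union ?_ (hcl b a))
    by_cases h : a = b
    · have : {_r : M → M → Bool | a = b} = Set.univ := by
        ext r; simp [h]
      rw [this]; exact isClosed_univ
    · have : {_r : M → M → Bool | a = b} = ∅ := by
        ext r; simp [h]
      rw [this]; exact isClosed_empty
  · exact isClosed_iInter fun a => hco a a
  · refine isClosed_iInter fun a => isClosed_iInter fun b => isClosed_iInter fun c => ?_
    have : {r : M → M → Bool | ¬ r a b = true ∨ ¬ r b c = true ∨ r a c = true} =
        {r : M → M → Bool | ¬ r a b = true} ∪ ({r : M → M → Bool | ¬ r b c = true} ∪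
          {r : M → M → Bool | r a c = true}) := rfl
    rw [this]
    exact (hco a b).union ((hco b c).union (hcl a c))


instance : CompactSpace (LO M) :=
  isCompact_iff_compactSpace.mp (isClosed_setLO (M := M)).isCompact

lemma nhds_pi_discrete {ι : Type*} {β : Type*} [TopologicalSpace β] [DiscreteTopology β]
    {f : ι → β} {t : Set (ι → β)} (ht : t ∈ 𝓝 f) :
    ∃ J : Finset ι, {g : ι → β | ∀ i ∈ J, g i = f i} ⊆ t := by
  classical
  rw [nhds_pi, Filter.mem_pi] at ht
  obtain ⟨I, hIf, u, hu, hsub⟩ := ht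
  refine ⟨hIf.toFinset, fun g hg => hsub fun i hi => ?_⟩
  have hgi : g i = f i := hg i (hIf.mem_toFinset.mpr hi)
  rw [hgi]
  have := hu i
  rwa [nhds_discrete, Filter.mem_pure] at this

lemma exists_agree_nhds {x : LO M} {S : Set (LO M)} (hS : S ∈ 𝓝 x) :
    ∃ F : Finset M, ∀ r : LO M, (∀ a ∈ F, ∀ b ∈ F, r.1 a b = x.1 a b) → r ∈ S := by
  classical
  rw [nhds_induced] at hS
  obtain ⟨S₁, hS₁, hsub⟩ := hS
  rw [nhds_pi, Filter.mem_pi] at hS₁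
  obtain ⟨I, hIf, t, ht, hsub1⟩ := hS₁
  have hJ : ∀ a : M, ∃ J : Finset M, {g : M → Bool | ∀ i ∈ J, g i = x.1 a i} ⊆ t a :=
    fun a => nhds_pi_discrete (ht a)
  choose J hJ' using hJ
  refine ⟨hIf.toFinset ∪ hIf.toFinset.biUnion J, fun r hr => ?_⟩
  apply hsub
  apply hsub1
  intro a ha
  have haF : a ∈ hIf.toFinset := hIf.mem_toFinset.mpr ha
  apply hJ' a
  intro b hb
  exact hr a (Finset.mem_union_left _ haF)
    b (Finset.mem_union_right _ (Finset.mem_biUnion.mpr ⟨a, haF, hb⟩))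

lemma isOpen_agree (F : Finset M) (x : LO M) :
    IsOpen {r : LO M | ∀ a ∈ F, ∀ b ∈ F, r.1 a b = x.1 a b} := by
  have heq : {r : LO M | ∀ a ∈ F, ∀ b ∈ F, r.1 a b = x.1 a b} =
      ⋂ a ∈ F, ⋂ b ∈ F, {r : LO M | r.1 a b = x.1 a b} := by
    ext r; simp
  rw [heq]
  refine isOpen_biInter_finset fun a _ => isOpen_biInter_finset fun b _ => ?_
  exact (isOpen_discrete {x.1 a b}).preimage (continuous_evalLO a b)

lemma mem_closure_LO_iff {s : Set (LO M)} {x : LO M} :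
    x ∈ closure s ↔ ∀ F : Finset M, ∃ r ∈ s, ∀ a ∈ F, ∀ b ∈ F, r.1 a b = x.1 a b := by
  rw [mem_closure_iff_nhds]
  constructor
  · intro h F
    obtain ⟨r, hr1, hr2⟩ := h _ ((isOpen_agree F x).mem_nhds (fun a _ b _ => rfl))
    exact ⟨r, hr2, hr1⟩
  · intro h t ht
    obtain ⟨F, hF⟩ := exists_agree_nhds ht
    obtain ⟨r, hrs, hagree⟩ := h F
    exact ⟨r, hF r hagree, hrs⟩

lemma exists_finset_nhds_one {U : Set (M ≃[L] M)} (hU : U ∈ 𝓝 (1 : M ≃[L] M)) :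
    ∃ E : Finset M, ∀ u : M ≃[L] M,
      (∀ a ∈ E, u a = a) → (∀ a ∈ E, u.symm a = a) → u ∈ U := by
  classical
  letI : TopologicalSpace M := ⊥
  haveI : DiscreteTopology M := ⟨rfl⟩
  rw [nhds_induced (fun g : M ≃[L] M => ((g : M → M), (g.symm : M → M)))] at hU
  obtain ⟨W, hW, hsub⟩ := hU
  rw [nhds_prod_eq, Filter.mem_prod_iff] at hW
  obtain ⟨W₁, hW₁, W₂, hW₂, hWsub⟩ := hW
  obtain ⟨E₁, hE₁⟩ := nhds_pi_discrete hW₁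
  obtain ⟨E₂, hE₂⟩ := nhds_pi_discrete hW₂
  refine ⟨E₁ ∪ E₂, fun u h1 h2 => ?_⟩
  apply hsub
  apply hWsub
  constructor
  · exact hE₁ fun a ha => h1 a (Finset.mem_union_left _ ha)
  · exact hE₂ fun a ha => h2 a (Finset.mem_union_right _ ha)


lemma mem_fullOrbitLO {r q : LO M} : q ∈ fullOrbitLO L M r ↔ ∃ g : M ≃[L] M, permLO g.toEquiv r = q :=
  Iff.rfl

lemma permLO_mem_fullOrbitLO (g : M ≃[L] M) {r q : LO M} (hq : q ∈ fullOrbitLO L M r) :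
    permLO g.toEquiv q ∈ fullOrbitLO L M r := by
  obtain ⟨h, rfl⟩ := hq
  exact ⟨g * h, (permLO_mul g h r).symm⟩

lemma permLO_image_fullOrbitLO (g : M ≃[L] M) (r : LO M) :
    (fun q => permLO g.toEquiv q) '' fullOrbitLO L M r = fullOrbitLO L M r := by
  apply Set.Subset.antisymm
  · rintro q ⟨q', hq', rfl⟩
    exact permLO_mem_fullOrbitLO g hq'
  · rintro q ⟨h, rfl⟩
    refine ⟨permLO (g⁻¹ * h).toEquiv r, ⟨g⁻¹ * h, rfl⟩, ?_⟩
    show permLO g.toEquiv (permLO (g⁻¹ * h).toEquiv r) = permLO h.toEquiv r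
    rw [← permLO_mul, mul_inv_cancel_left]

lemma permLO_mem_closure_fullOrbitLO (g : M ≃[L] M) {r q : LO M}
    (hq : q ∈ closure (fullOrbitLO L M r)) :
    permLO g.toEquiv q ∈ closure (fullOrbitLO L M r) := by
  have h1 := (image_closure_subset_closure_image (continuous_permLO g.toEquiv))
    (Set.mem_image_of_mem _ hq)
  rwa [permLO_image_fullOrbitLO] at h1

lemma equicont {Y : Type x} [UniformSpace Y] [CompactSpace Y]
    [MulAction (M ≃[L] M) Y] [ContinuousSMul (M ≃[L] M) Y] {V : Set (Y × Y)}
    (hV : V ∈ 𝓤 Y) :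
    ∃ E : Finset M, ∀ u : M ≃[L] M, (∀ a ∈ E, u a = a) → (∀ a ∈ E, u.symm a = a) →
      ∀ y : Y, (u • y, y) ∈ V := by
  obtain ⟨V', ⟨hV', hVo⟩, hsubV⟩ := uniformity_hasBasis_open.mem_iff.mp hV
  have hΦ : Continuous fun p : (M ≃[L] M) × Y => (p.1 • p.2, p.2) :=
    continuous_smul.prodMk continuous_snd
  have hsub2 : ({(1 : M ≃[L] M)} ×ˢ (Set.univ : Set Y)) ⊆
      (fun p : (M ≃[L] M) × Y => (p.1 • p.2, p.2)) ⁻¹' V' := by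
    rintro ⟨u, y⟩ ⟨hu, -⟩
    rcases hu with rfl
    show ((1 : M ≃[L] M) • y, y) ∈ V'
    rw [one_smul]
    exact refl_mem_uniformity hV'
  obtain ⟨U, W, hUo, _hWo, hU1, hWuniv, hUW⟩ :=
    generalized_tube_lemma isCompact_singleton isCompact_univ (hVo.preimage hΦ) hsub2
  obtain ⟨E, hE⟩ := exists_finset_nhds_one (hUo.mem_nhds (hU1 rfl))
  refine ⟨E, fun u h1 h2 y => ?_⟩
  have : (u, y) ∈ U ×ˢ W := ⟨hE u h1 h2, hWuniv trivial⟩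
  exact hsubV (hUW this)


lemma bool_eq_of_iff {a b : Bool} (h : (a = true) ↔ (b = true)) : a = b := by
  cases a <;> cases b <;> simp_all

lemma STO_restrict (r : LO M) (S : L.Substructure M) :
    IsStrictTotalOrder S (fun x y : S => r.1 ↑x ↑y = true) := by
  haveI := r.2
  exact
    { trichotomous := fun a b h1 h2 => by
        rcases trichotomous_of (fun x y : M => r.1 x y = true) ↑a ↑b with h | h | h
        · exact (h1 h).elim
        · exact Subtype.ext h
        · exact (h2 h).elim
      irrefl := fun a h => irrefl_of (fun x y : M => r.1 x y = true) (↑a : M) h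
      trans := fun a b c hab hbc =>
        trans_of (fun x y : M => r.1 x y = true) hab hbc }

lemma carrier_finite (hfin : ∀ S : L.Substructure M, S.FG → Finite S)
    {T : L.Substructure M} (hT : T.FG) : (T : Set M).Finite := by
  haveI : Finite T := hfin T hT
  exact Set.finite_coe_iff.mp ‹_›

lemma prec_mem_closure_orbit (hhom : L.IsUltrahomogeneous M)
    (hfin : ∀ S : L.Substructure M, S.FG → Finite S)
    (prec : LO M) (hop : OrderingProperty L M prec)
    {lt : LO M} (hlt : lt ∈ closure (fullOrbitLO L M prec)) :
    prec ∈ closure (fullOrbitLO L M lt) := by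
  rw [mem_closure_LO_iff]
  intro F
  set S := Substructure.closure L (F : Set M) with hS
  have hSfg : S.FG := Substructure.fg_closure F.finite_toSet
  obtain ⟨T, hTfg, hT⟩ := hop S hSfg
  have hTset : (T : Set M).Finite := carrier_finite hfin hTfg
  rw [mem_closure_LO_iff] at hlt
  obtain ⟨q, ⟨g, rfl⟩, hq⟩ := hlt hTset.toFinset
  have hageT : InOrderedAge L M prec T (fun x y : T => lt.1 ↑x ↑y) := by
    refine ⟨g.symm.toEmbedding.comp T.subtype, fun x y => ?_⟩
    have := hq ↑x (hTset.mem_toFinset.mpr x.2) ↑y (hTset.mem_toFinset.mpr y.2)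
    rw [permLO_apply] at this
    show lt.1 ↑x ↑y = true ↔ prec.1 (g.symm ↑x) (g.symm ↑y) = true
    rw [← this]
    exact Iff.rfl

  have hageS : InOrderedAge L M prec S (fun x y : S => prec.1 ↑x ↑y) :=
    ⟨S.subtype, fun x y => Iff.rfl⟩
  obtain ⟨e₀, he₀⟩ := hT (fun x y : S => prec.1 ↑x ↑y) (fun x y : T => lt.1 ↑x ↑y)
    (STO_restrict prec S) (STO_restrict lt T) hageS hageT
  obtain ⟨g₁, hg₁⟩ := hhom S hSfg (T.subtype.comp e₀)
  refine ⟨permLO (g₁⁻¹).toEquiv lt, ⟨g₁⁻¹, rfl⟩, ?_⟩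
  intro a ha b hb
  have haS : a ∈ S := Substructure.subset_closure ha
  have hbS : b ∈ S := Substructure.subset_closure hb
  have h1 : ∀ (x : S), (g₁ : M → M) ↑x = ↑(e₀ x) := by
    intro x
    exact (DFunLike.congr_fun hg₁ x).symm
  rw [permLO_apply]
  show lt.1 ((g₁⁻¹).toEquiv.symm a) ((g₁⁻¹).toEquiv.symm b) = prec.1 a b
  have hsymm : ∀ m : M, (g₁⁻¹).toEquiv.symm m = g₁ m := fun _ => rfl
  rw [hsymm, hsymm, h1 ⟨a, haS⟩, h1 ⟨b, hbS⟩]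
  exact (bool_eq_of_iff (he₀ ⟨a, haS⟩ ⟨b, hbS⟩)).symm

lemma minimal_orbit_closure (hhom : L.IsUltrahomogeneous M)
    (hfin : ∀ S : L.Substructure M, S.FG → Finite S)
    (prec : LO M) (hop : OrderingProperty L M prec)
    {lt : LO M} (hlt : lt ∈ closure (fullOrbitLO L M prec)) :
    closure (fullOrbitLO L M prec) ⊆ closure (fullOrbitLO L M lt) := by
  have hp := prec_mem_closure_orbit hhom hfin prec hop hlt
  have horb : fullOrbitLO L M prec ⊆ closure (fullOrbitLO L M lt) := by
    rintro q ⟨g, rfl⟩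
    exact permLO_mem_closure_fullOrbitLO g hp
  exact closure_minimal horb isClosed_closure


/-! ### Ramsey ⇒ fixed point -/

/-- `g` preserves the ordering `prec`. -/
def Pres (prec : LO M) (g : M ≃[L] M) : Prop :=
  ∀ a b : M, prec.1 (g a) (g b) = prec.1 a b

lemma pres_one (prec : LO M) : Pres (L := L) prec 1 := fun _ _ => rfl

lemma pres_mul {prec : LO M} {g h : M ≃[L] M} (hg : Pres prec g) (hh : Pres prec h) :
    Pres prec (g * h) := fun a b => by
  rw [aut_mul_apply, aut_mul_apply, hg, hh]

lemma pres_inv {prec : LO M} {g : M ≃[L] M} (hg : Pres prec g) : Pres prec g⁻¹ := by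
  intro a b
  have h := hg (g⁻¹ a) (g⁻¹ b)
  simp only [aut_inv_apply] at h ⊢
  rw [g.apply_symm_apply, g.apply_symm_apply] at h
  exact h.symm

lemma strictMono_finite_fix {α : Type*} [LinearOrder α] [Finite α] {f : α → α}
    (hmono : StrictMono f) (x : α) : f x = x := by
  have hbij : Function.Bijective f := Finite.injective_iff_bijective.mp hmono.injective
  have he : StrictMono.orderIsoOfSurjective f hmono hbij.2 = OrderIso.refl α :=
    Subsingleton.elim _ _
  have h2 := congrArg (fun g : α ≃o α => g x) he
  simpa [StrictMono.coe_orderIsoOfSurjective] using h2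

lemma aut_fixes_of_map_eq (hfin : ∀ S : L.Substructure M, S.FG → Finite S)
    (prec : LO M) {S : L.Substructure M} (hS : S.FG)
    {u : M ≃[L] M} (hu : Pres prec u) (hmap : S.map u.toEmbedding.toHom = S) :
    ∀ x ∈ S, u x = x := by
  haveI : Finite S := hfin S hS
  letI : LinearOrder S := @linearOrderOfSTO S (fun x y : S => prec.1 ↑x ↑y = true)
    (STO_restrict prec S) (Classical.decRel _)
  have hmem : ∀ x : S, u ↑x ∈ S := fun x => by
    have h1 : u ↑x ∈ S.map u.toEmbedding.toHom := ⟨↑x, x.2, rfl⟩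
    rwa [hmap] at h1
  have hmono : StrictMono (fun x : S => (⟨u ↑x, hmem x⟩ : S)) := by
    intro x y hxy
    show prec.1 (u ↑x) (u ↑y) = true
    rw [hu]
    exact hxy
  intro x hx
  exact congrArg Subtype.val (strictMono_finite_fix hmono ⟨x, hx⟩)

lemma finite_cover_balls {Y : Type x} [UniformSpace Y] [CompactSpace Y] [Nonempty Y]
    {V : Set (Y × Y)} (hV : V ∈ 𝓤 Y) :
    ∃ n : ℕ, 2 ≤ n ∧ ∃ z : Fin n → Y, ∃ χ : Y → Fin n, ∀ w : Y, (z (χ w), w) ∈ V := by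
  classical
  obtain ⟨V', ⟨hV'u, hV'o⟩, hV'sub⟩ := uniformity_hasBasis_open.mem_iff.mp hV
  have hcov : (Set.univ : Set Y) ⊆ ⋃ y : Y, UniformSpace.ball y V' := fun y _ =>
    Set.mem_iUnion.mpr ⟨y, refl_mem_uniformity hV'u⟩
  obtain ⟨t, ht⟩ := isCompact_univ.elim_finite_subcover (fun y : Y => UniformSpace.ball y V')
    (fun y => UniformSpace.isOpen_ball y hV'o) hcov
  have hw : ∀ w : Y, ∃ yt : {a // a ∈ t}, w ∈ UniformSpace.ball (↑yt) V' := by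
    intro w
    obtain ⟨yy, hyy, hmem⟩ := Set.mem_iUnion₂.mp (ht (Set.mem_univ w))
    exact ⟨⟨yy, hyy⟩, hmem⟩
  choose yw hyw using hw
  refine ⟨t.card + 2, by omega, ?_⟩
  refine ⟨fun i => if h : (i : ℕ) < t.card then ↑(t.equivFin.symm ⟨i, h⟩) else
    Classical.arbitrary Y, fun w => Fin.castLE (by omega) (t.equivFin (yw w)), fun w => ?_⟩
  have hlt : ((Fin.castLE (by omega : t.card ≤ t.card + 2) (t.equivFin (yw w))) : ℕ) < t.card :=
    (t.equivFin (yw w)).2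
  beta_reduce
  rw [dif_pos hlt]
  have : (⟨(Fin.castLE (by omega : t.card ≤ t.card + 2) (t.equivFin (yw w)) : ℕ), hlt⟩ :
      Fin t.card) = t.equivFin (yw w) := by
    apply Fin.ext
    rfl
  rw [this, Equiv.symm_apply_apply]
  exact hV'sub (hyw w)

lemma almost_fixed (hfin : ∀ S : L.Substructure M, S.FG → Finite S)
    (prec : LO M) (hohom : OrdUltrahomogeneous L M prec)
    (hramsey : OrderedAgeRamsey L M prec)
    {Y : Type x} [UniformSpace Y] [CompactSpace Y] [Nonempty Y]
    [MulAction (M ≃[L] M) Y] [ContinuousSMul (M ≃[L] M) Y]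
    (Fs : Finset (M ≃[L] M)) (hFs : ∀ g ∈ Fs, Pres prec g)
    {V : Set (Y × Y)} (hV : V ∈ 𝓤 Y) :
    ∃ y' : Y, ∀ g ∈ Fs, (g • y', y') ∈ V := by
  classical
  obtain ⟨V₂, hV₂, hV₂s, hV₂sub⟩ := comp_symm_mem_uniformity_sets hV
  obtain ⟨V₁, hV₁, hV₁s, hV₁sub⟩ := comp_symm_mem_uniformity_sets hV₂
  obtain ⟨n, hn2, z, χ, hχ⟩ := finite_cover_balls hV₁
  obtain ⟨E, hE⟩ := equicont (L := L) (M := M) hV₁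
  set y := Classical.arbitrary Y with hy
  set S := Substructure.closure L (E : Set M) with hSdef
  have hSfg : S.FG := Substructure.fg_closure E.finite_toSet
  have hSsub : (E : Set M) ⊆ S := Substructure.subset_closure
  have hSfin : (S : Set M).Finite := carrier_finite hfin hSfg
  have hfix : ∀ u : M ≃[L] M, (∀ a ∈ S, u a = a) → ∀ w : Y, (u • w, w) ∈ V₁ := by
    intro u h1 w
    have h2 : ∀ a ∈ S, u.symm a = a := by
      intro a ha
      have := h1 a ha
      conv_lhs => rw [← this]
      exact u.symm_apply_apply a
    exact hE u (fun a ha => h1 a (hSsub ha)) (fun a ha => h2 a (hSsub ha)) w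
  have hwd : ∀ u u' : M ≃[L] M, Pres prec u → Pres prec u' →
      S.map u.toEmbedding.toHom = S.map u'.toEmbedding.toHom →
      (u⁻¹ • y, u'⁻¹ • y) ∈ V₁ := by
    intro u u' hu hu' hmapeq
    have hkmap : S.map (u⁻¹ * u').toEmbedding.toHom = S := by
      apply le_antisymm
      · rintro b ⟨m, hm, rfl⟩
        have h1 : u' m ∈ S.map u'.toEmbedding.toHom := ⟨m, hm, rfl⟩
        rw [← hmapeq] at h1
        obtain ⟨m', hm', hm'2⟩ := h1
        have : (u⁻¹ * u').toEmbedding.toHom m = m' := by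
          show u⁻¹ (u' m) = m'
          rw [← hm'2]
          show u⁻¹ (u m') = m'
          rw [aut_inv_apply, u.symm_apply_apply]
        rw [this]
        exact hm'
      · intro b hb
        have h1 : u b ∈ S.map u.toEmbedding.toHom := ⟨b, hb, rfl⟩
        rw [hmapeq] at h1
        obtain ⟨m, hm, hm2⟩ := h1
        refine ⟨m, hm, ?_⟩
        have hm2' : u' m = u b := hm2
        show u⁻¹ (u' m) = b
        rw [hm2', aut_inv_apply, u.symm_apply_apply]
    have hfixk := aut_fixes_of_map_eq hfin prec hSfg (pres_mul (pres_inv hu) hu') hkmap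
    have heq : u⁻¹ • y = (u⁻¹ * u') • (u'⁻¹ • y) := by
      rw [← mul_smul, mul_assoc, mul_inv_cancel, mul_one]
    rw [heq]
    exact hfix (u⁻¹ * u') hfixk (u'⁻¹ • y)
  set T := Substructure.closure L ((S : Set M) ∪ ⋃ g ∈ Fs, (fun m => g⁻¹ m) '' (S : Set M))
    with hTdef
  have hTfg : T.FG := Substructure.fg_closure
    (hSfin.union (Set.Finite.biUnion Fs.finite_toSet fun g _ => hSfin.image _))
  have hST : S ≤ T := by
    rw [hSdef]
    apply (Substructure.closure_le).mpr
    intro a ha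
    exact Substructure.subset_closure (Or.inl (hSsub ha))
  have hgT : ∀ g ∈ Fs, ∀ a ∈ S, g⁻¹ a ∈ T := by
    intro g hg a ha
    apply Substructure.subset_closure
    exact Or.inr (Set.mem_biUnion hg ⟨a, ha, rfl⟩)
  set Good : L.Substructure M → Prop :=
    fun S' => ∃ w : M ≃[L] M, Pres prec w ∧ S.map w.toEmbedding.toHom = S' with hGood
  set c : L.Substructure M → Fin n := fun S' =>
    if h : Good S' then χ ((Classical.choose h)⁻¹ • y) else ⟨0, by omega⟩ with hcdef
  have hc : ∀ (w : M ≃[L] M), Pres prec w → ∀ S', S.map w.toEmbedding.toHom = S' →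
      (z (c S'), w⁻¹ • y) ∈ V₂ := by
    intro w hw S' hmap
    have hgood : Good S' := ⟨w, hw, hmap⟩
    obtain ⟨hwp, hmp⟩ := Classical.choose_spec hgood
    have h1 : (z (χ ((Classical.choose hgood)⁻¹ • y)), (Classical.choose hgood)⁻¹ • y) ∈ V₁ :=
      hχ _
    have h2 : ((Classical.choose hgood)⁻¹ • y, w⁻¹ • y) ∈ V₁ :=
      hwd _ _ hwp hw (by rw [hmp, hmap])
    have hcv : c S' = χ ((Classical.choose hgood)⁻¹ • y) := dif_pos hgood
    rw [hcv]
    exact hV₁sub ⟨_, h1, h2⟩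
  have hembST : ∃ e : S ↪[L] T, ∀ x y' : S, prec.1 ↑x ↑y' = true ↔ prec.1 ↑(e x) ↑(e y') = true :=
    ⟨Substructure.inclusion hST, fun x y' => Iff.rfl⟩
  obtain ⟨C, _hCfg, hC⟩ := hramsey S T hSfg hTfg hembST n hn2
  obtain ⟨T', hT'C, ⟨φiso, hφ⟩, i₀, hmono⟩ := hC c
  have hιord : ∀ x y' : T, prec.1 ↑x ↑y' = true ↔
      prec.1 (((Substructure.subtype T').comp φiso.toEmbedding) x)
        (((Substructure.subtype T').comp φiso.toEmbedding) y') = true := fun x y' => hφ x y'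
  obtain ⟨w₀, hw₀p, hw₀⟩ := hohom T hTfg ((Substructure.subtype T').comp φiso.toEmbedding) hιord
  refine ⟨w₀⁻¹ • y, ?_⟩
  intro g hg
  have key : ∀ u : M ≃[L] M, Pres prec u → (∀ a ∈ S, u⁻¹ a ∈ T) →
      (z i₀, (u * w₀⁻¹) • y) ∈ V₂ := by
    intro u hu huT
    have hwup : Pres prec (w₀ * u⁻¹) := pres_mul hw₀p (pres_inv hu)
    have hS'T' : S.map (w₀ * u⁻¹).toEmbedding.toHom ≤ T' := by
      rintro x ⟨m, hm, rfl⟩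
      have h1 : u⁻¹ m ∈ T := huT m hm
      have h2 : (w₀ * u⁻¹).toEmbedding.toHom m = ((Substructure.subtype T').comp
          φiso.toEmbedding) (⟨u⁻¹ m, h1⟩ : T) := by
        show w₀ (u⁻¹ m) = _
        rw [← hw₀ ⟨u⁻¹ m, h1⟩]
      rw [h2]
      exact (φiso ⟨u⁻¹ m, h1⟩).2
    have hcopy : OrdIsoCopy L M prec S (S.map (w₀ * u⁻¹).toEmbedding.toHom) := by
      refine ⟨(w₀ * u⁻¹).toEmbedding.substructureEquivMap S, fun a b => ?_⟩
      have hco : ∀ x : S, ((((w₀ * u⁻¹).toEmbedding.substructureEquivMap S) x : M)) =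
          (w₀ * u⁻¹) ↑x := fun x => rfl
      rw [hco, hco, hwup]
    have hcS : c (S.map (w₀ * u⁻¹).toEmbedding.toHom) = i₀ := hmono _ hS'T' hcopy
    have h2 := hc (w₀ * u⁻¹) hwup _ rfl
    rw [hcS] at h2
    have hinv : (w₀ * u⁻¹)⁻¹ = u * w₀⁻¹ := by rw [mul_inv_rev, inv_inv]
    rwa [hinv] at h2
  have hkg := key g (hFs g hg) (fun a ha => hgT g hg a ha)
  have hk1 : (z i₀, w₀⁻¹ • y) ∈ V₂ := by
    have := key 1 (pres_one prec) (fun a ha => by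
      rw [inv_one]
      show (1 : M ≃[L] M) a ∈ T
      rw [aut_one_apply]
      exact hST ha)
    rwa [one_mul] at this
  have hkg' : ((g * w₀⁻¹) • y, z i₀) ∈ V₂ := hV₂s.symm _ _ hkg
  have hfinal : ((g * w₀⁻¹) • y, w₀⁻¹ • y) ∈ V := hV₂sub ⟨z i₀, hkg', hk1⟩
  rwa [mul_smul] at hfinal

lemma exists_fixed_point (hfin : ∀ S : L.Substructure M, S.FG → Finite S)
    (prec : LO M) (hohom : OrdUltrahomogeneous L M prec)
    (hramsey : OrderedAgeRamsey L M prec)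
    {Y : Type x} [UniformSpace Y] [CompactSpace Y] [T0Space Y] [Nonempty Y]
    [MulAction (M ≃[L] M) Y] [ContinuousSMul (M ≃[L] M) Y] :
    ∃ y₀ : Y, ∀ g : M ≃[L] M, Pres prec g → g • y₀ = y₀ := by
  classical
  set ι := {p : (M ≃[L] M) × Set (Y × Y) // Pres prec p.1 ∧ p.2 ∈ 𝓤 Y ∧ IsClosed p.2} with hι
  set Z : ι → Set Y := fun p => {w : Y | (p.1.1 • w, w) ∈ p.1.2} with hZ
  have hZc : ∀ p, IsClosed (Z p) := by
    intro p
    have : Continuous fun w : Y => (p.1.1 • w, w) :=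
      (continuous_const_smul _).prodMk continuous_id
    exact p.2.2.2.preimage this
  have hne : (Set.univ ∩ ⋂ p, Z p).Nonempty := by
    by_contra hempty
    rw [Set.not_nonempty_iff_eq_empty] at hempty
    obtain ⟨t, ht⟩ := isCompact_univ.elim_finite_subfamily_closed Z hZc hempty
    have hW : (⋂ p ∈ t, (p : ι).1.2) ∈ 𝓤 Y :=
      (Filter.biInter_finset_mem t).mpr fun p _ => p.2.2.1
    obtain ⟨y', hy'⟩ := almost_fixed hfin prec hohom hramsey
      (t.image fun p : ι => p.1.1)
      (by
        intro g hg
        obtain ⟨p, _, rfl⟩ := Finset.mem_image.mp hg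
        exact p.2.1) hW
    have : y' ∈ Set.univ ∩ ⋂ p ∈ t, Z p := by
      refine ⟨trivial, Set.mem_iInter₂.mpr fun p hp => ?_⟩
      have h1 := hy' p.1.1 (Finset.mem_image.mpr ⟨p, hp, rfl⟩)
      exact Set.mem_iInter₂.mp h1 p hp
    rw [ht] at this
    exact this
  obtain ⟨y₀, -, hy₀⟩ := hne
  refine ⟨y₀, fun g hgp => ?_⟩
  apply eq_of_uniformity_basis uniformity_hasBasis_closed
  intro V hV
  exact Set.mem_iInter.mp hy₀ ⟨(g, V), hgp, hV.1, hV.2⟩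


/-! ### Uniform continuity of the orbit map and the extension -/

lemma orbit_map_uc (hfin : ∀ S : L.Substructure M, S.FG → Finite S)
    (prec : LO M) (hohom : OrdUltrahomogeneous L M prec)
    {Y : Type x} [UniformSpace Y] [CompactSpace Y]
    [MulAction (M ≃[L] M) Y] [ContinuousSMul (M ≃[L] M) Y]
    {y₀ : Y} (hy₀ : ∀ g : M ≃[L] M, Pres prec g → g • y₀ = y₀)
    {V : Set (Y × Y)} (hV : V ∈ 𝓤 Y) :
    ∃ F : Finset M, ∀ g h : M ≃[L] M,
      (∀ a ∈ F, ∀ b ∈ F, (permLO g.toEquiv prec).1 a b = (permLO h.toEquiv prec).1 a b) →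
      (g • y₀, h • y₀) ∈ V := by
  classical
  obtain ⟨E, hE⟩ := equicont (L := L) (M := M) hV
  set S := Substructure.closure L (E : Set M) with hSdef
  have hSfg : S.FG := Substructure.fg_closure E.finite_toSet
  have hSsub : (E : Set M) ⊆ S := Substructure.subset_closure
  have hSfin : (S : Set M).Finite := carrier_finite hfin hSfg
  refine ⟨hSfin.toFinset, fun g h hagree => ?_⟩
  have hagree' : ∀ a ∈ S, ∀ b ∈ S, prec.1 (g.symm a) (g.symm b) = prec.1 (h.symm a) (h.symm b) := by
    intro a ha b hb
    have h1 := hagree a (hSfin.mem_toFinset.mpr ha) b (hSfin.mem_toFinset.mpr hb)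
    rw [permLO_apply, permLO_apply] at h1
    exact h1
  set D := S.map (h⁻¹).toEmbedding.toHom with hD
  have hDfg : D.FG := hSfg.map _
  set e : D ↪[L] M := ((g⁻¹ * h).toEmbedding).comp D.subtype with he
  have heord : ∀ x y' : D, prec.1 ↑x ↑y' = true ↔ prec.1 (e x) (e y') = true := by
    rintro ⟨xm, hx⟩ ⟨ym, hy⟩
    obtain ⟨a, ha, rfl⟩ := hx
    obtain ⟨b, hb, rfl⟩ := hy
    have e1 : ∀ m : M, (g⁻¹ * h) ((h⁻¹).toEmbedding.toHom m) = g⁻¹ m := by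
      intro m
      show g⁻¹ (h (h⁻¹ m)) = g⁻¹ m
      rw [aut_inv_apply h, h.apply_symm_apply]
    show prec.1 ((h⁻¹).toEmbedding.toHom a) ((h⁻¹).toEmbedding.toHom b) = true ↔
      prec.1 ((g⁻¹ * h) ((h⁻¹).toEmbedding.toHom a)) ((g⁻¹ * h) ((h⁻¹).toEmbedding.toHom b)) = true
    rw [e1, e1]
    show prec.1 (h⁻¹ a) (h⁻¹ b) = true ↔ prec.1 (g⁻¹ a) (g⁻¹ b) = true
    simp only [aut_inv_apply]
    rw [hagree' a ha b hb]
  obtain ⟨v, hvp, hv⟩ := hohom D hDfg e heord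
  have hufix : ∀ a ∈ S, (g * v * h⁻¹) a = a := by
    intro a ha
    have hmem : (h⁻¹).toEmbedding.toHom a ∈ D := ⟨a, ha, rfl⟩
    have h1 : v ((h⁻¹).toEmbedding.toHom a) = e (⟨_, hmem⟩ : D) := hv ⟨_, hmem⟩
    show g (v (h⁻¹ a)) = a
    have h2 : v (h⁻¹ a) = g⁻¹ (h (h⁻¹ a)) := h1
    rw [h2, aut_inv_apply h, h.apply_symm_apply, aut_inv_apply g, g.apply_symm_apply]
  have husymm : ∀ a ∈ S, (g * v * h⁻¹).symm a = a := by
    intro a ha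
    conv_lhs => rw [← hufix a ha]
    exact (g * v * h⁻¹).symm_apply_apply a
  have hu := hE (g * v * h⁻¹) (fun a ha => hufix a (hSsub ha))
    (fun a ha => husymm a (hSsub ha)) (h • y₀)
  have hsimp : (g * v * h⁻¹) • (h • y₀) = g • y₀ := by
    rw [← mul_smul, mul_assoc, mul_assoc, inv_mul_cancel, mul_one, mul_smul, hy₀ v hvp]
  rwa [hsimp] at hu

end Aux

open Set Filter Uniformity






/-- If `(A, ≺)` is an `ω`-homogeneous linearly ordered structure (over an `ω`-homogeneous `A`)
whose finitely generated substructures are finite and whose age satisfies both the Ramsey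
property and the ordering property, then `cl(H·≺) ⊆ LO(A)` is the universal minimal flow of
`H = Aut(A)`: it is a minimal `H`-flow and every minimal `H`-flow is a continuous
`H`-equivariant image of it. -/
theorem orbit_closure_is_universal_minimal_flow (hL : L.card ≤ Cardinal.aleph0)
    (hhom : L.IsUltrahomogeneous M)
    (hfin : ∀ S : L.Substructure M, S.FG → Finite S)
    (prec : LO M) (hohom : OrdUltrahomogeneous L M prec)
    (hramsey : OrderedAgeRamsey L M prec) (hop : OrderingProperty L M prec) :
    (∀ lt ∈ closure (fullOrbitLO L M prec),
      closure (fullOrbitLO L M prec) ⊆ closure (fullOrbitLO L M lt)) ∧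
    (∀ (Y : Type x) [TopologicalSpace Y] [CompactSpace Y] [T2Space Y] [Nonempty Y]
        [MulAction (M ≃[L] M) Y] [ContinuousSMul (M ≃[L] M) Y],
      (∀ y : Y, Dense (MulAction.orbit (M ≃[L] M) y)) →
      ∃ φ : closure (fullOrbitLO L M prec) → Y,
        Continuous φ ∧ Function.Surjective φ ∧
        ∀ (g : M ≃[L] M) (r : LO M) (hr : r ∈ closure (fullOrbitLO L M prec))
            (hgr : permLO g.toEquiv r ∈ closure (fullOrbitLO L M prec)),
          φ ⟨permLO g.toEquiv r, hgr⟩ = g • φ ⟨r, hr⟩) := by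
  classical
  constructor
  · intro lt hlt
    exact minimal_orbit_closure hhom hfin prec hop hlt
  · intro Y topY compY t2Y neY actY contY hmin
    letI uY : UniformSpace Y := uniformSpaceOfCompactR1
    haveI hcY : @CompactSpace Y uY.toTopologicalSpace := compY
    haveI ht2 : @T2Space Y uY.toTopologicalSpace := t2Y
    haveI hcsY : @ContinuousSMul (M ≃[L] M) Y _ _ uY.toTopologicalSpace := contY
    obtain ⟨y₀, hy₀⟩ := exists_fixed_point (L := L) (M := M) hfin prec hohom hramsey (Y := Y)
    set orb := fullOrbitLO L M prec with horbdef
    set K := closure orb with hKdef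
    haveI : CompactSpace K := isCompact_iff_compactSpace.mp isClosed_closure.isCompact
    set i : orb → K := Set.inclusion subset_closure with hidef
    have hiemb : Topology.IsEmbedding i := Topology.IsEmbedding.inclusion subset_closure
    have hidense : DenseRange i := by
      intro xK
      have himg : Subtype.val '' Set.range i = orb := by
        ext m
        constructor
        · rintro ⟨q, ⟨r, rfl⟩, rfl⟩
          exact r.2
        · intro hm
          exact ⟨i ⟨m, hm⟩, ⟨⟨m, hm⟩, rfl⟩, rfl⟩
      rw [closure_subtype, himg]
      exact xK.2
    have di : IsDenseInducing i := ⟨hiemb.toIsInducing, hidense⟩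
    have hex : ∀ r : orb, ∃ g : M ≃[L] M, permLO g.toEquiv prec = ↑r := fun r => r.2
    set f : orb → Y := fun r => (Classical.choose (hex r)) • y₀ with hfdef
    have hwdf : ∀ g h : M ≃[L] M, permLO g.toEquiv prec = permLO h.toEquiv prec →
        g • y₀ = h • y₀ := by
      intro g h hgh
      apply eq_of_uniformity (α := Y)
      intro V hV
      obtain ⟨F, hF⟩ := orbit_map_uc hfin prec hohom hy₀ hV
      exact hF g h fun a _ b _ => by rw [hgh]
    have hfval : ∀ (r : orb) (g : M ≃[L] M), permLO g.toEquiv prec = ↑r → f r = g • y₀ := by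
      intro r g hg
      exact hwdf _ g (by rw [Classical.choose_spec (hex r), hg])
    have hfkey : ∀ V ∈ 𝓤 Y, ∃ F : Finset M, ∀ r r' : orb,
        (∀ a ∈ F, ∀ b ∈ F, (↑r : LO M).1 a b = (↑r' : LO M).1 a b) → (f r, f r') ∈ V := by
      intro V hV
      obtain ⟨F, hF⟩ := orbit_map_uc hfin prec hohom hy₀ hV
      refine ⟨F, fun r r' hagree => ?_⟩
      apply hF
      intro a ha b hb
      rw [Classical.choose_spec (hex r), Classical.choose_spec (hex r')]
      exact hagree a ha b hb
    have hfc : Continuous f := by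
      rw [continuous_iff_continuousAt]
      intro r
      refine Filter.tendsto_def.mpr fun W hW => ?_
      obtain ⟨V, hV, hVsub⟩ := UniformSpace.mem_nhds_iff.mp hW
      obtain ⟨F, hF⟩ := hfkey V hV
      have hN : (Subtype.val ⁻¹'
          {q : LO M | ∀ a ∈ F, ∀ b ∈ F, q.1 a b = (↑r : LO M).1 a b}) ∈ 𝓝 r :=
        continuous_subtype_val.continuousAt.preimage_mem_nhds
          ((isOpen_agree F ↑r).mem_nhds fun a _ b _ => rfl)
      refine Filter.mem_of_superset hN fun r' hr' => ?_
      apply hVsub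
      exact hF r r' fun a ha b hb => (hr' a ha b hb).symm
    have hlim : ∀ xK : K, ∃ ylim : Y, Filter.Tendsto f (Filter.comap i (𝓝 xK)) (𝓝 ylim) := by
      intro xK
      haveI := di.comap_nhds_neBot xK
      obtain ⟨ylim, hcl⟩ :=
        exists_clusterPt_of_compactSpace (Filter.map f (Filter.comap i (𝓝 xK)))
      refine ⟨ylim, Filter.tendsto_def.mpr fun W hW => ?_⟩
      obtain ⟨V₀, hV₀, hV₀sub⟩ := UniformSpace.mem_nhds_iff.mp hW
      obtain ⟨V₂, hV₂, hV₂s, hV₂sub⟩ := comp_symm_mem_uniformity_sets hV₀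
      obtain ⟨F, hF⟩ := hfkey V₂ hV₂
      have hBmem : (i ⁻¹' (Subtype.val ⁻¹'
          {q : LO M | ∀ a ∈ F, ∀ b ∈ F, q.1 a b = (↑xK : LO M).1 a b})) ∈
          Filter.comap i (𝓝 xK) :=
        Filter.preimage_mem_comap (continuous_subtype_val.continuousAt.preimage_mem_nhds
          ((isOpen_agree F ↑xK).mem_nhds fun a _ b _ => rfl))
      obtain ⟨p, hp1, hp2⟩ := clusterPt_iff_nonempty.mp hcl
        (UniformSpace.ball_mem_nhds ylim hV₂) (Filter.image_mem_map hBmem)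
      obtain ⟨r₀, hr₀B, rfl⟩ := hp2
      refine Filter.mem_of_superset hBmem fun r hrB => ?_
      apply hV₀sub
      have h1 : (ylim, f r₀) ∈ V₂ := hp1
      have hagr₀ : ∀ a ∈ F, ∀ b ∈ F, (↑r₀ : LO M).1 a b = (↑xK : LO M).1 a b := hr₀B
      have hagr : ∀ a ∈ F, ∀ b ∈ F, (↑r : LO M).1 a b = (↑xK : LO M).1 a b := hrB
      have h2 : (f r₀, f r) ∈ V₂ :=
        hF r₀ r fun a ha b hb => by rw [hagr₀ a ha b hb, hagr a ha b hb]
      exact hV₂sub ⟨f r₀, h1, h2⟩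
    set φK := di.extend f with hφKdef
    have hφc : Continuous φK := di.continuous_extend hlim
    have hφeq : ∀ r : orb, φK (i r) = f r := fun r => di.extend_eq hfc r
    have hmemK : ∀ (g : M ≃[L] M) (xK : K), permLO g.toEquiv ↑xK ∈ K := fun g xK =>
      permLO_mem_closure_fullOrbitLO g xK.2
    have hequiv : ∀ (g : M ≃[L] M) (xK : K),
        φK ⟨permLO g.toEquiv ↑xK, hmemK g xK⟩ = g • φK xK := by
      intro g xK
      have heqfun : (fun xK : K => φK ⟨permLO g.toEquiv ↑xK, hmemK g xK⟩) =
          fun xK : K => g • φK xK := by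
        apply Continuous.ext_on hidense
        · exact hφc.comp (Continuous.subtype_mk
            ((continuous_permLO g.toEquiv).comp continuous_subtype_val) _)
        · exact (continuous_const_smul g).comp hφc
        · rintro _ ⟨r, rfl⟩
          have h1 : (⟨permLO g.toEquiv ↑(i r), hmemK g (i r)⟩ : K) =
              i ⟨permLO g.toEquiv ↑r, permLO_mem_fullOrbitLO g r.2⟩ := Subtype.ext rfl
          show φK ⟨permLO g.toEquiv ↑(i r), hmemK g (i r)⟩ = g • φK (i r)
          rw [h1, hφeq, hφeq]
          have hg₀ := Classical.choose_spec (hex r)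
          rw [hfval r _ hg₀]
          have hval : permLO (g * Classical.choose (hex r)).toEquiv prec =
              ↑(⟨permLO g.toEquiv ↑r, permLO_mem_fullOrbitLO g r.2⟩ : orb) := by
            rw [permLO_mul, hg₀]
          rw [hfval _ _ hval, mul_smul]
      exact congrFun heqfun xK
    have hKprec : prec ∈ K := subset_closure ⟨1, permLO_one prec⟩
    have hsurj : Function.Surjective φK := by
      have hclosed : @IsClosed Y topY (Set.range φK) := (isCompact_range hφc).isClosed
      have hinvr : ∀ (g : M ≃[L] M), ∀ yy ∈ Set.range φK, g • yy ∈ Set.range φK := by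
        rintro g _ ⟨xK, rfl⟩
        exact ⟨⟨permLO g.toEquiv ↑xK, hmemK g xK⟩, hequiv g xK⟩
      intro yv
      have hdense := hmin (φK ⟨prec, hKprec⟩)
      have h1 : yv ∈ @closure Y topY (MulAction.orbit (M ≃[L] M) (φK ⟨prec, hKprec⟩)) := by
        rw [hdense.closure_eq]
        trivial
      have horb2 : MulAction.orbit (M ≃[L] M) (φK ⟨prec, hKprec⟩) ⊆ Set.range φK := by
        rintro _ ⟨g, rfl⟩
        exact hinvr g _ ⟨_, rfl⟩
      have h2 := closure_mono horb2 h1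
      rw [hclosed.closure_eq] at h2
      exact h2
    refine ⟨φK, hφc, hsurj, ?_⟩
    intro g r hr hgr
    exact hequiv g ⟨r, hr⟩
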